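/- Let μ > 0, H̄ > 0, M ≥ 0, and let ρ : [0,H̄] → ℝ be continuous with |ρ(ξ)| ≤ M for all ξ ∈ [0,H̄]. Let η ∈ C²([0,H̄]) satisfy η''(ξ) + μ² η(ξ) = ρ(ξ) η(ξ) on [0,H̄] with η(0) = 0, and set α = η'(0)/μ. Then for all ξ ∈ [0,H̄]: |η(ξ) − α sin(μ ξ)| ≤ |α| (e^{M ξ/μ} − 1). In particular, for every δ > 0 and every bound r ≥ |α| there exists μ₀ > 0 (depending only on δ, M, H̄, r) such that μ ≥ μ₀ implies |η(ξ) − α sin(μ ξ)| ≤ δ for all ξ ∈ [0,H̄]. -/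

import Mathlib

open Set MeasureTheory Filter

lemma myOfRealD {f : ℝ → ℝ} {u : ℝ} {s : Set ℝ} {x : ℝ} (hf : HasDerivWithinAt f u s x) :
    HasDerivWithinAt (fun x => (f x : ℂ)) (u : ℂ) s x := by
  exact Complex.ofRealCLM.hasFDerivAt.comp_hasDerivWithinAt x hf

lemma myExpD (μ : ℝ) (t : ℝ) :
    HasDerivAt (fun s : ℝ => Complex.exp (Complex.I * μ * s))
      (Complex.I * μ * Complex.exp (Complex.I * μ * t)) t := by
  have h1 : HasDerivAt (fun s : ℝ => ((s : ℂ))) 1 t := by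
    exact Complex.ofRealCLM.hasDerivAt (x := t)
  have h2 : HasDerivAt (fun s : ℝ => Complex.I * ↑μ * ↑s) (Complex.I * μ) t := by
    simpa using h1.const_mul (Complex.I * (μ:ℂ))
  simpa [mul_comm] using h2.cexp

lemma myExpNorm (μ t : ℝ) : ‖Complex.exp (Complex.I * μ * t)‖ = 1 := by
  simp [Complex.norm_exp]

lemma myExpAbs (μ t : ℝ) : ‖Complex.exp (Complex.I * μ * t)‖ = 1 := by
  simpa using myExpNorm μ t

lemma key18 (Hb M : ℝ) (ρ : ℝ → ℝ) (hHb : 0 < Hb) (hM : 0 ≤ M)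
    (hρcont : ContinuousOn ρ (Set.Icc (0:ℝ) Hb))
    (hρbdd : ∀ ξ ∈ Set.Icc (0:ℝ) Hb, |ρ ξ| ≤ M)
    (μ : ℝ) (η η' η'' : ℝ → ℝ) (hμ : 0 < μ)
    (hd1 : ∀ ξ ∈ Set.Icc (0:ℝ) Hb, HasDerivWithinAt η (η' ξ) (Set.Icc (0:ℝ) Hb) ξ)
    (hd2 : ∀ ξ ∈ Set.Icc (0:ℝ) Hb, HasDerivWithinAt η' (η'' ξ) (Set.Icc (0:ℝ) Hb) ξ)
    (hode : ∀ ξ ∈ Set.Icc (0:ℝ) Hb, η'' ξ + μ ^ 2 * η ξ = ρ ξ * η ξ)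
    (h0 : η 0 = 0) :
    ∀ ξ ∈ Set.Icc (0:ℝ) Hb,
      |η ξ - (η' 0 / μ) * Real.sin (μ * ξ)| ≤ |η' 0 / μ| * (Real.exp (M * ξ / μ) - 1) := by
  set α : ℝ := η' 0 / μ with hα
  set e : ℝ → ℂ := fun t => Complex.exp (Complex.I * μ * t) with he
  set S : Set ℝ := Set.Icc (0:ℝ) Hb with hS
  have hode' : ∀ ξ ∈ S, η'' ξ = ρ ξ * η ξ - μ^2 * η ξ := fun ξ hξ => by
    have := hode ξ hξ; linarith
  have hηc : ContinuousOn η S := fun x hx => (hd1 x hx).continuousWithinAt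
  have hη'c : ContinuousOn η' S := fun x hx => (hd2 x hx).continuousWithinAt
  set w : ℝ → ℂ := fun t => ((μ:ℂ) * (η t : ℂ) + Complex.I * (η' t : ℂ)) * e t with hw
  set D : ℝ → ℂ := fun t => Complex.I * ((ρ t * η t : ℝ) : ℂ) * e t with hD
  have hwD : ∀ t ∈ S, HasDerivWithinAt w (D t) S t := by
    intro t ht
    have hp : HasDerivWithinAt (fun s => (μ:ℂ) * (η s : ℂ) + Complex.I * (η' s : ℂ))
        ((μ:ℂ) * (η' t : ℂ) + Complex.I * (η'' t : ℂ)) S t :=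
      ((myOfRealD (hd1 t ht)).const_mul (μ:ℂ)).add
        ((myOfRealD (hd2 t ht)).const_mul Complex.I)
    have := hp.mul ((myExpD μ t).hasDerivWithinAt (s := S))
    convert this using 1
    · rfl
    · rfl
    have h2 := hode' t ht
    rw [hD]
    push_cast [h2]
    linear_combination (-(Complex.exp (Complex.I * μ * t) * (μ:ℂ) * ((η' t : ℝ):ℂ))) * Complex.I_sq
  have hwcont : ContinuousOn w S := fun x hx => (hwD x hx).continuousWithinAt
  have hnormw : ∀ t, ‖w t‖ = ‖(μ:ℂ) * (η t : ℂ) + Complex.I * (η' t : ℂ)‖ := by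
    intro t
    rw [hw]
    simp only [norm_mul]
    rw [he]
    simp only [myExpAbs, mul_one]
  have hre : ∀ t, μ * |η t| ≤ ‖w t‖ := by
    intro t
    rw [hnormw]
    have h1 : μ * η t = ((μ:ℂ) * (η t : ℂ) + Complex.I * (η' t : ℂ)).re := by simp
    calc μ * |η t| = |μ * η t| := by rw [abs_mul, abs_of_pos hμ]
    _ ≤ _ := by rw [h1]; exact Complex.abs_re_le_norm _
  have hnormD : ∀ t ∈ S, ‖D t‖ ≤ M * |η t| := by
    intro t ht
    have heq : ‖D t‖ = |ρ t * η t| := by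
      simp only [hD, he, norm_mul, Complex.norm_I, one_mul, Complex.norm_real,
        Real.norm_eq_abs, myExpNorm, mul_one, abs_mul]
    rw [heq, abs_mul]
    exact mul_le_mul_of_nonneg_right (hρbdd t ht) (abs_nonneg _)
  have hw0 : ‖w 0‖ ≤ |η' 0| := by
    rw [hnormw]; simp [h0]
  have hwIci : ∀ t ∈ Set.Ico (0:ℝ) Hb, HasDerivWithinAt w (D t) (Set.Ici t) t := by
    intro t ht
    refine (hwD t (Set.Ico_subset_Icc_self ht)).mono_of_mem_nhdsWithin ?_
    exact Filter.mem_of_superset (Icc_mem_nhdsGE_of_mem ⟨le_rfl, ht.2⟩)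
      (Set.Icc_subset_Icc ht.1 le_rfl)
  have hwbd : ∀ t ∈ Set.Ico (0:ℝ) Hb, ‖D t‖ ≤ (M/μ) * ‖w t‖ + 0 := by
    intro t ht
    rw [add_zero]
    calc ‖D t‖ ≤ M * |η t| := hnormD t (Set.Ico_subset_Icc_self ht)
    _ = (M/μ) * (μ * |η t|) := by field_simp
    _ ≤ (M/μ) * ‖w t‖ :=
      mul_le_mul_of_nonneg_left (hre t) (div_nonneg hM hμ.le)
  have hgron := norm_le_gronwallBound_of_norm_deriv_right_le hwcont hwIci hw0 hwbd
  have hwle : ∀ t ∈ S, ‖w t‖ ≤ |η' 0| * Real.exp (M / μ * t) := by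
    intro t ht
    have := hgron t ht
    rwa [sub_zero, gronwallBound_ε0] at this
  have hηle : ∀ t ∈ S, |η t| ≤ |η' 0| / μ * Real.exp (M / μ * t) := by
    intro t ht
    have h1 := (hre t).trans (hwle t ht)
    rw [div_mul_eq_mul_div, le_div_iff₀ hμ]
    linarith [h1]
  set z : ℝ → ℂ := fun t =>
    ((μ:ℂ) * ((η t - α * Real.sin (μ * t) : ℝ) : ℂ)
      + Complex.I * ((η' t - α * μ * Real.cos (μ * t) : ℝ) : ℂ)) * e t with hz
  have hzD : ∀ t ∈ S, HasDerivWithinAt z (D t) S t := by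
    intro t ht
    have hsin : HasDerivWithinAt (fun s : ℝ => η s - α * Real.sin (μ * s))
        (η' t - α * (μ * Real.cos (μ * t))) S t := by
      refine (hd1 t ht).sub (HasDerivAt.hasDerivWithinAt ?_)
      have h3 : HasDerivAt (fun s : ℝ => Real.sin (μ * s)) (Real.cos (μ * t) * μ) t :=
        (Real.hasDerivAt_sin (μ * t)).comp t (by simpa using (hasDerivAt_id t).const_mul μ)
      simpa [mul_comm] using h3.const_mul α
    have hcos : HasDerivWithinAt (fun s : ℝ => η' s - α * μ * Real.cos (μ * s))
        (η'' t - α * μ * (-Real.sin (μ * t) * μ)) S t := by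
      refine (hd2 t ht).sub (HasDerivAt.hasDerivWithinAt ?_)
      have h3 : HasDerivAt (fun s : ℝ => Real.cos (μ * s)) (-Real.sin (μ * t) * μ) t :=
        (Real.hasDerivAt_cos (μ * t)).comp t (by simpa using (hasDerivAt_id t).const_mul μ)
      exact h3.const_mul (α * μ)
    have hp : HasDerivWithinAt
        (fun s => (μ:ℂ) * ((η s - α * Real.sin (μ * s) : ℝ) : ℂ)
          + Complex.I * ((η' s - α * μ * Real.cos (μ * s) : ℝ) : ℂ))
        ((μ:ℂ) * ((η' t - α * (μ * Real.cos (μ * t)) : ℝ) : ℂ)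
          + Complex.I * ((η'' t - α * μ * (-Real.sin (μ * t) * μ) : ℝ) : ℂ)) S t :=
      ((myOfRealD hsin).const_mul (μ:ℂ)).add ((myOfRealD hcos).const_mul Complex.I)
    have := hp.mul ((myExpD μ t).hasDerivWithinAt (s := S))
    convert this using 1
    · rfl
    · rfl
    have h2 := hode' t ht
    rw [hD]
    push_cast [h2]
    linear_combination (-(Complex.exp (Complex.I * μ * t) * (μ:ℂ) * ((η' t : ℝ):ℂ))
      + Complex.exp (Complex.I * μ * t) * (μ:ℂ)^2 * ((α : ℝ):ℂ)
        * Complex.cos ((μ:ℂ) * (t:ℂ))) * Complex.I_sq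
  have hzcont : ContinuousOn z S := fun x hx => (hzD x hx).continuousWithinAt
  have hz0 : z 0 = 0 := by
    have h1 : η 0 - α * Real.sin (μ * 0) = 0 := by simp [h0]
    have h2 : η' 0 - α * μ * Real.cos (μ * 0) = 0 := by
      rw [hα, mul_zero, Real.cos_zero, mul_one]; rw [div_mul_cancel₀ _ hμ.ne', sub_self]
    simp only [hz, h1, h2]
    simp
  intro ξ hξ
  have hξ0 : (0:ℝ) ≤ ξ := hξ.1
  have hsub : Set.Icc (0:ℝ) ξ ⊆ S := by rw [hS]; exact Set.Icc_subset_Icc le_rfl hξ.2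
  have hec : Continuous e := by
    rw [he]
    exact Complex.continuous_exp.comp (continuous_const.mul Complex.continuous_ofReal)
  have hDcont : ContinuousOn D S := by
    rw [hD]
    exact (continuousOn_const.mul
      (Complex.continuous_ofReal.comp_continuousOn (hρcont.mul hηc))).mul hec.continuousOn
  have hzIoo : ∀ x ∈ Set.Ioo (0:ℝ) ξ, HasDerivWithinAt z (D x) (Set.Ioi x) x := by
    intro x hx
    have hxS : x ∈ S := ⟨hx.1.le, hx.2.le.trans hξ.2⟩
    have hmem : S ∈ nhds x := by
      rw [hS]
      exact Icc_mem_nhds hx.1 (lt_of_lt_of_le hx.2 hξ.2)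
    exact ((hzD x hxS).hasDerivAt hmem).hasDerivWithinAt
  have hint : IntervalIntegrable D volume 0 ξ := by
    apply ContinuousOn.intervalIntegrable
    rw [Set.uIcc_of_le hξ0]
    exact hDcont.mono hsub
  have hftc := intervalIntegral.integral_eq_sub_of_hasDeriv_right_of_le hξ0
    (hzcont.mono hsub) hzIoo hint
  have hzval : z ξ = ∫ τ in (0:ℝ)..ξ, D τ := by rw [hftc, hz0, sub_zero]
  set g : ℝ → ℝ := fun τ => |η' 0| * ((M/μ) * Real.exp (M/μ * τ)) with hg
  have hgb : ∀ τ ∈ Set.Ioc (0:ℝ) ξ, ‖D τ‖ ≤ g τ := by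
    intro τ hτ
    have hτS : τ ∈ S := ⟨hτ.1.le, hτ.2.trans hξ.2⟩
    calc ‖D τ‖ ≤ M * |η τ| := hnormD τ hτS
    _ ≤ M * (|η' 0| / μ * Real.exp (M / μ * τ)) :=
      mul_le_mul_of_nonneg_left (hηle τ hτS) hM
    _ = g τ := by rw [hg]; field_simp
  have hae : ∀ᵐ τ ∂(volume.restrict (Set.uIoc (0:ℝ) ξ)), ‖D τ‖ ≤ g τ := by
    filter_upwards [MeasureTheory.ae_restrict_mem measurableSet_uIoc] with τ hτ
    apply hgb
    rwa [Set.uIoc_of_le hξ0] at hτ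
  have hgcont : Continuous g := by
    rw [hg]
    exact continuous_const.mul (continuous_const.mul
      (Real.continuous_exp.comp (continuous_const.mul continuous_id)))
  have hgint : IntervalIntegrable g volume 0 ξ := hgcont.intervalIntegrable 0 ξ
  have hnormint := intervalIntegral.norm_integral_le_abs_of_norm_le hae hgint
  have hF : ∀ t : ℝ, HasDerivAt (fun τ : ℝ => |η' 0| * Real.exp (M/μ * τ)) (g t) t := by
    intro t
    have h1 : HasDerivAt (fun τ : ℝ => (M/μ) * τ) (M/μ) t := by
      simpa using (hasDerivAt_id t).const_mul (M/μ)
    have h2 := h1.exp.const_mul |η' 0|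
    convert h2 using 1
    · rfl
    · rfl
    rw [hg]; ring
  have hintg : (∫ τ in (0:ℝ)..ξ, g τ) = |η' 0| * (Real.exp (M/μ * ξ) - 1) := by
    rw [intervalIntegral.integral_eq_sub_of_hasDerivAt (fun t _ => hF t) hgint]
    simp [mul_sub]
  have hexp1 : (1:ℝ) ≤ Real.exp (M / μ * ξ) := by
    rw [← Real.exp_zero]
    exact Real.exp_le_exp.mpr (mul_nonneg (div_nonneg hM hμ.le) hξ0)
  have hzb : ‖z ξ‖ ≤ |η' 0| * (Real.exp (M/μ * ξ) - 1) := by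
    rw [hzval]
    refine hnormint.trans ?_
    rw [hintg, abs_of_nonneg (mul_nonneg (abs_nonneg _) (by linarith))]
  have hre2 : μ * |η ξ - α * Real.sin (μ * ξ)| ≤ ‖z ξ‖ := by
    have h1 : ‖z ξ‖ = ‖(μ:ℂ) * ((η ξ - α * Real.sin (μ * ξ) : ℝ) : ℂ)
        + Complex.I * ((η' ξ - α * μ * Real.cos (μ * ξ) : ℝ) : ℂ)‖ := by
      rw [hz]
      simp only [norm_mul]
      rw [he]
      simp only [myExpAbs, mul_one]
    rw [h1]
    have h2 : μ * (η ξ - α * Real.sin (μ * ξ)) =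
        ((μ:ℂ) * ((η ξ - α * Real.sin (μ * ξ) : ℝ) : ℂ)
          + Complex.I * ((η' ξ - α * μ * Real.cos (μ * ξ) : ℝ) : ℂ)).re := by
      simp only [Complex.add_re, Complex.mul_re, Complex.ofReal_re, Complex.ofReal_im,
        Complex.I_re, Complex.I_im]
      ring
    calc μ * |η ξ - α * Real.sin (μ * ξ)| = |μ * (η ξ - α * Real.sin (μ * ξ))| := by
          rw [abs_mul, abs_of_pos hμ]
    _ ≤ _ := by rw [h2]; exact Complex.abs_re_le_norm _
  have h9 : μ * |η ξ - α * Real.sin (μ * ξ)| ≤ |η' 0| * (Real.exp (M / μ * ξ) - 1) :=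
    hre2.trans hzb
  have hfin : |η ξ - α * Real.sin (μ * ξ)| ≤ |η' 0| / μ * (Real.exp (M / μ * ξ) - 1) := by
    have h10 : |η ξ - α * Real.sin (μ * ξ)| ≤ (|η' 0| * (Real.exp (M / μ * ξ) - 1)) / μ :=
      (le_div_iff₀ hμ).mpr (by linarith)
    calc |η ξ - α * Real.sin (μ * ξ)| ≤ _ := h10
    _ = |η' 0| / μ * (Real.exp (M / μ * ξ) - 1) := by ring
  have hαabs : |α| = |η' 0| / μ := by rw [hα, abs_div, abs_of_pos hμ]
  have harg : M * ξ / μ = M / μ * ξ := by ring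
  rw [hαabs, harg]
  exact hfin
theorem stmt18
    (Hb M : ℝ) (ρ : ℝ → ℝ)
    (hHb : 0 < Hb) (hM : 0 ≤ M)
    (hρcont : ContinuousOn ρ (Set.Icc (0:ℝ) Hb))
    (hρbdd : ∀ ξ ∈ Set.Icc (0:ℝ) Hb, |ρ ξ| ≤ M) :
    (∀ (μ : ℝ) (η η' η'' : ℝ → ℝ), 0 < μ →
      (∀ ξ ∈ Set.Icc (0:ℝ) Hb, HasDerivWithinAt η (η' ξ) (Set.Icc (0:ℝ) Hb) ξ) →
      (∀ ξ ∈ Set.Icc (0:ℝ) Hb, HasDerivWithinAt η' (η'' ξ) (Set.Icc (0:ℝ) Hb) ξ) →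
      ContinuousOn η'' (Set.Icc (0:ℝ) Hb) →
      (∀ ξ ∈ Set.Icc (0:ℝ) Hb, η'' ξ + μ ^ 2 * η ξ = ρ ξ * η ξ) →
      η 0 = 0 →
      ∀ ξ ∈ Set.Icc (0:ℝ) Hb,
        |η ξ - (η' 0 / μ) * Real.sin (μ * ξ)| ≤
          |η' 0 / μ| * (Real.exp (M * ξ / μ) - 1)) ∧
    (∀ δ r : ℝ, 0 < δ → 0 ≤ r →
      ∃ μ₀ : ℝ, 0 < μ₀ ∧
        ∀ (μ : ℝ) (η η' η'' : ℝ → ℝ), μ₀ ≤ μ →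
          (∀ ξ ∈ Set.Icc (0:ℝ) Hb, HasDerivWithinAt η (η' ξ) (Set.Icc (0:ℝ) Hb) ξ) →
          (∀ ξ ∈ Set.Icc (0:ℝ) Hb, HasDerivWithinAt η' (η'' ξ) (Set.Icc (0:ℝ) Hb) ξ) →
          ContinuousOn η'' (Set.Icc (0:ℝ) Hb) →
          (∀ ξ ∈ Set.Icc (0:ℝ) Hb, η'' ξ + μ ^ 2 * η ξ = ρ ξ * η ξ) →
          η 0 = 0 → |η' 0 / μ| ≤ r →
          ∀ ξ ∈ Set.Icc (0:ℝ) Hb,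
            |η ξ - (η' 0 / μ) * Real.sin (μ * ξ)| ≤ δ) := by
  constructor
  · intro μ η η' η'' hμ hd1 hd2 _ hode h0
    exact key18 Hb M ρ hHb hM hρcont hρbdd μ η η' η'' hμ hd1 hd2 hode h0
  · intro δ r hδ hr
    refine ⟨max (max 1 (M * Hb)) (3 * (M * Hb) * (r + 1) / δ), ?_, ?_⟩
    · exact lt_of_lt_of_le one_pos ((le_max_left _ _).trans (le_max_left _ _))
    intro μ η η' η'' hμ₀ hd1 hd2 hcont hode h0 hrb ξ hξ
    have hμ1 : (1:ℝ) ≤ μ := ((le_max_left _ _).trans (le_max_left _ _)).trans hμ₀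
    have hμ : 0 < μ := lt_of_lt_of_le one_pos hμ1
    have hμMH : M * Hb ≤ μ := ((le_max_right _ _).trans (le_max_left _ _)).trans hμ₀
    have hμ3 : 3 * (M * Hb) * (r + 1) / δ ≤ μ := (le_max_right _ _).trans hμ₀
    have hkey := key18 Hb M ρ hHb hM hρcont hρbdd μ η η' η'' hμ hd1 hd2 hode h0 ξ hξ
    set x : ℝ := M * Hb / μ with hx
    have hx0 : 0 ≤ x := div_nonneg (mul_nonneg hM hHb.le) hμ.le
    have hx1 : x ≤ 1 := (div_le_one hμ).mpr hμMH
    have hexp_mono : Real.exp (M * ξ / μ) ≤ Real.exp x := by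
      apply Real.exp_le_exp.mpr
      rw [hx]
      have h1 : M * ξ ≤ M * Hb := mul_le_mul_of_nonneg_left hξ.2 hM
      exact (div_le_div_iff₀ hμ hμ).mpr (by nlinarith [h1, hμ])
    have hexp0 : (1:ℝ) ≤ Real.exp (M * ξ / μ) := by
      rw [← Real.exp_zero]
      exact Real.exp_le_exp.mpr (div_nonneg (mul_nonneg hM hξ.1) hμ.le)
    have step1 : |η ξ - (η' 0 / μ) * Real.sin (μ * ξ)| ≤ r * (Real.exp x - 1) := by
      refine hkey.trans ?_
      apply mul_le_mul hrb (by linarith [hexp_mono]) (by linarith [hexp0]) hr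
    -- now show r * (exp x - 1) ≤ δ
    have h4 : (1 - x) * Real.exp x ≤ 1 := by
      have h5 := Real.add_one_le_exp (-x)
      rw [Real.exp_neg] at h5
      have h6 := mul_le_mul_of_nonneg_right h5 (Real.exp_pos x).le
      rw [inv_mul_cancel₀ (Real.exp_pos x).ne'] at h6
      nlinarith [h6]
    have hexp3 : Real.exp x ≤ 3 := by
      calc Real.exp x ≤ Real.exp 1 := Real.exp_le_exp.mpr hx1
      _ ≤ 3 := by linarith [Real.exp_one_lt_d9]
    have hex3x : Real.exp x - 1 ≤ 3 * x := by nlinarith [h4, hexp3, hx0]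
    have hlast : r * (Real.exp x - 1) ≤ δ := by
      rcases eq_or_lt_of_le (mul_nonneg hM hHb.le) with hc | hc
      · have : x = 0 := by rw [hx, ← hc]; simp
        rw [this]
        simp [Real.exp_zero]
        positivity
      · have hxle : x ≤ δ / (3 * (r + 1)) := by
          rw [hx, div_le_div_iff₀ hμ (by positivity)]
          have h7 : 3 * (M * Hb) * (r + 1) ≤ δ * μ := by
            rw [div_le_iff₀ hδ] at hμ3
            linarith [hμ3]
          nlinarith [h7]
        calc r * (Real.exp x - 1) ≤ r * (3 * x) :=
              mul_le_mul_of_nonneg_left hex3x hr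
        _ ≤ (r + 1) * (3 * x) := by nlinarith [hx0]
        _ ≤ (r + 1) * (3 * (δ / (3 * (r + 1)))) := by
              apply mul_le_mul_of_nonneg_left ?_ (by linarith)
              linarith [mul_le_mul_of_nonneg_left hxle (by norm_num : (0:ℝ) ≤ 3)]
        _ = δ := by field_simp
    exact step1.trans hlast
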